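/- Let Ω ⊂ ℝ² be open, bounded and simply connected, and let v : Ω → ℝ be smooth with Δv = 0 on Ω and with f := det∇²v satisfying f ≤ c₀ < 0 on Ω. Then Δ(log(−f)) = 0 on Ω. -/

import Mathlib

noncomputable section

open Real

/-- The plane ℝ². -/
abbrev E2 : Type := EuclideanSpace ℝ (Fin 2)

/-- Partial derivative in the `i`-th coordinate direction. -/
def pd (i : Fin 2) (f : E2 → ℝ) (x : E2) : ℝ :=
  fderiv ℝ f x (EuclideanSpace.single i 1)

/-- Hessian of a scalar function on ℝ². -/
def hess (f : E2 → ℝ) (x : E2) : Fin 2 → Fin 2 → ℝ :=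
  fun i j => pd i (pd j f) x

/-- Determinant of the Hessian. -/
def hessDet (f : E2 → ℝ) (x : E2) : ℝ :=
  hess f x 0 0 * hess f x 1 1 - hess f x 0 1 * hess f x 1 0

lemma contDiffOn_pd {Ω : Set E2} (hΩ : IsOpen Ω) {g : E2 → ℝ}
    (hg : ContDiffOn ℝ (⊤ : ℕ∞) g Ω) (i : Fin 2) :
    ContDiffOn ℝ (⊤ : ℕ∞) (pd i g) Ω := by
  have h1 : ContDiffOn ℝ (⊤ : ℕ∞) (fun x => fderiv ℝ g x) Ω :=
    hg.fderiv_of_isOpen hΩ (by decide)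
  exact h1.clm_apply contDiffOn_const

lemma da {F : Type} [NormedAddCommGroup F] [NormedSpace ℝ F] {Ω : Set E2} (hΩ : IsOpen Ω)
    {g : E2 → F} (hg : ContDiffOn ℝ (⊤ : ℕ∞) g Ω) {x : E2} (hx : x ∈ Ω) :
    DifferentiableAt ℝ g x :=
  (hg.contDiffAt (hΩ.mem_nhds hx)).differentiableAt (by decide)

lemma pd_congr {f g : E2 → ℝ} {x : E2} (h : f =ᶠ[nhds x] g) (i : Fin 2) :
    pd i f x = pd i g x := by
  unfold pd; rw [h.fderiv_eq]

lemma pd_congr_on {Ω : Set E2} (hΩ : IsOpen Ω) {f g : E2 → ℝ} {x : E2} (hx : x ∈ Ω)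
    (h : ∀ y ∈ Ω, f y = g y) (i : Fin 2) : pd i f x = pd i g x :=
  pd_congr (Filter.eventuallyEq_of_mem (hΩ.mem_nhds hx) h) i

lemma pd_eventuallyEq {f g : E2 → ℝ} {x : E2} (h : f =ᶠ[nhds x] g) (i : Fin 2) :
    pd i f =ᶠ[nhds x] pd i g := by
  filter_upwards [Filter.EventuallyEq.fderiv (𝕜 := ℝ) h] with y hy
  unfold pd; rw [hy]

lemma pd_swap {Ω : Set E2} (hΩ : IsOpen Ω) {g : E2 → ℝ}
    (hg : ContDiffOn ℝ (⊤ : ℕ∞) g Ω) {x : E2} (hx : x ∈ Ω) (i j : Fin 2) :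
    pd i (pd j g) x = pd j (pd i g) x := by
  have hsym : IsSymmSndFDerivAt ℝ g x :=
    (hg.contDiffAt (hΩ.mem_nhds hx)).isSymmSndFDerivAt
      (by simp only [minSmoothness_of_isRCLikeNormedField]; exact WithTop.coe_le_coe.mpr le_top)
  have hd : DifferentiableAt ℝ (fderiv ℝ g) x :=
    da hΩ (hg.fderiv_of_isOpen (m := (⊤:ℕ∞)) hΩ (by decide)) hx
  have key : ∀ a b : Fin 2, pd a (pd b g) x
      = fderiv ℝ (fderiv ℝ g) x (EuclideanSpace.single a 1) (EuclideanSpace.single b 1) := by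
    intro a b
    rw [show pd a (pd b g) x = fderiv ℝ (fun y => (fderiv ℝ g y) (EuclideanSpace.single b 1)) x
        (EuclideanSpace.single a 1) from rfl]
    rw [fderiv_clm_apply hd (differentiableAt_const _)]
    simp
  rw [key i j, key j i, hsym]

lemma pd_add {f g : E2 → ℝ} {x : E2} (hf : DifferentiableAt ℝ f x)
    (hg : DifferentiableAt ℝ g x) (i : Fin 2) :
    pd i (fun y => f y + g y) x = pd i f x + pd i g x := by
  unfold pd; rw [fderiv_fun_add hf hg]; rfl

lemma pd_neg {f : E2 → ℝ} {x : E2} (i : Fin 2) :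
    pd i (fun y => -(f y)) x = -(pd i f x) := by
  unfold pd; rw [fderiv_fun_neg]; rfl

lemma pd_mul {f g : E2 → ℝ} {x : E2} (hf : DifferentiableAt ℝ f x)
    (hg : DifferentiableAt ℝ g x) (i : Fin 2) :
    pd i (fun y => f y * g y) x = pd i f x * g x + f x * pd i g x := by
  unfold pd; rw [fderiv_fun_mul hf hg]; simp; ring

lemma pd_const_mul {f : E2 → ℝ} {x : E2} (hf : DifferentiableAt ℝ f x) (c : ℝ) (i : Fin 2) :
    pd i (fun y => c * f y) x = c * pd i f x := by
  unfold pd; rw [fderiv_const_mul hf]; simp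

lemma pd_log {f : E2 → ℝ} {x : E2} (hf : DifferentiableAt ℝ f x) (hx : f x ≠ 0) (i : Fin 2) :
    pd i (fun y => Real.log (f y)) x = (f x)⁻¹ * pd i f x := by
  unfold pd; rw [(hf.hasFDerivAt.log hx).fderiv]; simp

lemma pd_inv {f : E2 → ℝ} {x : E2} (hf : DifferentiableAt ℝ f x) (hx : f x ≠ 0) (i : Fin 2) :
    pd i (fun y => (f y)⁻¹) x = -(pd i f x) / (f x)^2 := by
  unfold pd
  rw [show (fun y => (f y)⁻¹) = (fun t : ℝ => t⁻¹) ∘ f from rfl,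
    fderiv_comp x (differentiableAt_inv hx) hf]
  rw [fderiv_inv]
  simp
  ring

/-- if `v` is smooth and harmonic on an open bounded simply connected `Ω ⊂ ℝ²`
and `f := det ∇²v ≤ c₀ < 0` on `Ω`, then `Δ(log(−f)) = 0` on `Ω`. -/
theorem stmt7 (Ω : Set E2) (hΩ : IsOpen Ω) (hbdd : Bornology.IsBounded Ω)
    (hsc : SimplyConnectedSpace Ω)
    (v : E2 → ℝ) (hv : ContDiffOn ℝ (⊤ : ℕ∞) v Ω)
    (hharm : ∀ x ∈ Ω, hess v x 0 0 + hess v x 1 1 = 0)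
    (c₀ : ℝ) (hc₀ : c₀ < 0)
    (hfneg : ∀ x ∈ Ω, hessDet v x ≤ c₀) :
    ∀ x ∈ Ω,
      pd 0 (pd 0 (fun y => Real.log (-(hessDet v y)))) x
        + pd 1 (pd 1 (fun y => Real.log (-(hessDet v y)))) x = 0 := by
  intro x hx
  set u : E2 → ℝ := pd 0 (pd 0 v) with hu_def
  set w : E2 → ℝ := pd 0 (pd 1 v) with hw_def
  set N : E2 → ℝ := fun y => u y * u y + w y * w y with hN_def
  -- smoothness
  have hv0 : ContDiffOn ℝ (⊤ : ℕ∞) (pd 0 v) Ω := contDiffOn_pd hΩ hv 0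
  have hv1 : ContDiffOn ℝ (⊤ : ℕ∞) (pd 1 v) Ω := contDiffOn_pd hΩ hv 1
  have hu : ContDiffOn ℝ (⊤ : ℕ∞) u Ω := contDiffOn_pd hΩ hv0 0
  have hw : ContDiffOn ℝ (⊤ : ℕ∞) w Ω := contDiffOn_pd hΩ hv1 0
  have hN : ContDiffOn ℝ (⊤ : ℕ∞) N Ω := (hu.mul hu).add (hw.mul hw)
  have hpu : ∀ i, ContDiffOn ℝ (⊤ : ℕ∞) (pd i u) Ω := fun i => contDiffOn_pd hΩ hu i
  have hpw : ∀ i, ContDiffOn ℝ (⊤ : ℕ∞) (pd i w) Ω := fun i => contDiffOn_pd hΩ hw i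
  have hpN : ∀ i, ContDiffOn ℝ (⊤ : ℕ∞) (pd i N) Ω := fun i => contDiffOn_pd hΩ hN i
  -- N = -(hessDet v) on Ω
  have hNeq : ∀ y ∈ Ω, -(hessDet v y) = N y := by
    intro y hy
    have hsymm : pd 0 (pd 1 v) y = pd 1 (pd 0 v) y := pd_swap hΩ hv hy 0 1
    have hh : pd 0 (pd 0 v) y + pd 1 (pd 1 v) y = 0 := hharm y hy
    simp only [hessDet, hess]
    simp only [hN_def, hu_def, hw_def]
    rw [← hsymm]
    have h11 : pd 1 (pd 1 v) y = -(pd 0 (pd 0 v) y) := by linarith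
    rw [h11]; ring
  have hNpos : ∀ y ∈ Ω, 0 < N y := by
    intro y hy
    have := hfneg y hy
    have := hNeq y hy
    linarith
  -- Cauchy–Riemann type relations on Ω
  have hCR1 : ∀ y ∈ Ω, pd 0 w y = pd 1 u y := by
    intro y hy
    have h1 : pd 1 (pd 0 (pd 0 v)) y = pd 0 (pd 1 (pd 0 v)) y := pd_swap hΩ hv0 hy 1 0
    have h2 : pd 0 (pd 1 (pd 0 v)) y = pd 0 (pd 0 (pd 1 v)) y :=
      pd_congr_on hΩ hy (fun z hz => pd_swap hΩ hv hz 1 0) 0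
    simp only [hu_def, hw_def]
    rw [h1, h2]
  have hCR2 : ∀ y ∈ Ω, pd 1 w y = -(pd 0 u y) := by
    intro y hy
    have h1 : pd 1 (pd 0 (pd 1 v)) y = pd 0 (pd 1 (pd 1 v)) y := pd_swap hΩ hv1 hy 1 0
    have h2 : pd 0 (pd 1 (pd 1 v)) y = pd 0 (fun z => -(u z)) y := by
      refine pd_congr_on hΩ hy (fun z hz => ?_) 0
      have := hharm z hz
      simp only [hess] at this
      simp only [hu_def]
      linarith
    simp only [hw_def]
    rw [h1, h2, pd_neg]
  -- harmonicity of u and w at x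
  have hLapu : pd 1 (pd 1 u) x = -(pd 0 (pd 0 u) x) := by
    have h1 : pd 1 (pd 1 u) x = pd 1 (pd 0 w) x :=
      pd_congr_on hΩ hx (fun z hz => ((hCR1 z hz).symm : pd 1 u z = pd 0 w z)) 1
    have h2 : pd 1 (pd 0 w) x = pd 0 (pd 1 w) x := pd_swap hΩ hw hx 1 0
    have h3 : pd 0 (pd 1 w) x = pd 0 (fun z => -(pd 0 u z)) x :=
      pd_congr_on hΩ hx (fun z hz => hCR2 z hz) 0
    rw [h1, h2, h3, pd_neg]
  have hLapw : pd 1 (pd 1 w) x = -(pd 0 (pd 0 w) x) := by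
    have h1 : pd 1 (pd 1 w) x = pd 1 (fun z => -(pd 0 u z)) x :=
      pd_congr_on hΩ hx (fun z hz => hCR2 z hz) 1
    have h2 : pd 1 (pd 0 u) x = pd 0 (pd 1 u) x := pd_swap hΩ hu hx 1 0
    have h3 : pd 0 (pd 1 u) x = pd 0 (pd 0 w) x :=
      pd_congr_on hΩ hx (fun z hz => (hCR1 z hz).symm) 0
    rw [h1, pd_neg, h2, h3]
  -- Step A: replace log(-hessDet) by log N
  have hstepA : ∀ i : Fin 2,
      pd i (pd i (fun y => Real.log (-(hessDet v y)))) x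
        = pd i (pd i (fun y => Real.log (N y))) x := by
    intro i
    have hEq : (fun y => Real.log (-(hessDet v y))) =ᶠ[nhds x] (fun y => Real.log (N y)) :=
      Filter.eventuallyEq_of_mem (hΩ.mem_nhds hx) (fun y hy => by rw [hNeq y hy])
    exact pd_congr (pd_eventuallyEq hEq i) i
  -- Step B,C: compute pd i (pd i (log N)) x
  have hstepB : ∀ i : Fin 2,
      pd i (pd i (fun y => Real.log (N y))) x
        = (-(pd i N x) / (N x)^2) * pd i N x + (N x)⁻¹ * pd i (pd i N) x := by
    intro i
    have h1 : pd i (pd i (fun y => Real.log (N y))) x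
        = pd i (fun y => (N y)⁻¹ * pd i N y) x := by
      refine pd_congr_on hΩ hx (fun z hz => ?_) i
      exact pd_log (da hΩ hN hz) (hNpos z hz).ne' i
    rw [h1, pd_mul ((da hΩ hN hx).fun_inv (hNpos x hx).ne') (da hΩ (hpN i) hx) i,
      pd_inv (da hΩ hN hx) (hNpos x hx).ne' i]
  -- derivative of N
  have hpdN : ∀ i : Fin 2, ∀ y ∈ Ω, pd i N y
      = (pd i u y * u y + u y * pd i u y) + (pd i w y * w y + w y * pd i w y) := by
    intro i y hy
    simp only [hN_def]
    rw [pd_add ((da hΩ hu hy).fun_mul (da hΩ hu hy)) ((da hΩ hw hy).fun_mul (da hΩ hw hy)) i,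
      pd_mul (da hΩ hu hy) (da hΩ hu hy) i, pd_mul (da hΩ hw hy) (da hΩ hw hy) i]
  have hpdpdN : ∀ i : Fin 2, pd i (pd i N) x
      = ((pd i (pd i u) x * u x + pd i u x * pd i u x)
          + (pd i u x * pd i u x + u x * pd i (pd i u) x))
        + ((pd i (pd i w) x * w x + pd i w x * pd i w x)
          + (pd i w x * pd i w x + w x * pd i (pd i w) x)) := by
    intro i
    have h1 : pd i (pd i N) x = pd i (fun y =>
        (pd i u y * u y + u y * pd i u y) + (pd i w y * w y + w y * pd i w y)) x :=
      pd_congr_on hΩ hx (hpdN i) i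
    rw [h1,
      pd_add (((da hΩ (hpu i) hx).fun_mul (da hΩ hu hx)).fun_add ((da hΩ hu hx).fun_mul (da hΩ (hpu i) hx)))
        (((da hΩ (hpw i) hx).fun_mul (da hΩ hw hx)).fun_add ((da hΩ hw hx).fun_mul (da hΩ (hpw i) hx))) i,
      pd_add ((da hΩ (hpu i) hx).fun_mul (da hΩ hu hx)) ((da hΩ hu hx).fun_mul (da hΩ (hpu i) hx)) i,
      pd_add ((da hΩ (hpw i) hx).fun_mul (da hΩ hw hx)) ((da hΩ hw hx).fun_mul (da hΩ (hpw i) hx)) i,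
      pd_mul (da hΩ (hpu i) hx) (da hΩ hu hx) i, pd_mul (da hΩ hu hx) (da hΩ (hpu i) hx) i,
      pd_mul (da hΩ (hpw i) hx) (da hΩ hw hx) i, pd_mul (da hΩ hw hx) (da hΩ (hpw i) hx) i]
  -- assemble
  rw [hstepA 0, hstepA 1, hstepB 0, hstepB 1]
  have e0 : pd 0 N x = (pd 0 u x * u x + u x * pd 0 u x) + (pd 0 w x * w x + w x * pd 0 w x) :=
    hpdN 0 x hx
  have e1 : pd 1 N x = (pd 1 u x * u x + u x * pd 1 u x) + (pd 1 w x * w x + w x * pd 1 w x) :=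
    hpdN 1 x hx
  have f0 := hpdpdN 0
  have f1 := hpdpdN 1
  have hw0 : pd 0 w x = pd 1 u x := hCR1 x hx
  have hw1 : pd 1 w x = -(pd 0 u x) := hCR2 x hx
  have hNx : N x = u x * u x + w x * w x := rfl
  have hNne : N x ≠ 0 := (hNpos x hx).ne'
  rw [e0, e1, f0, f1, hLapu, hLapw, hw0, hw1]
  field_simp
  ring
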